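/- Decomposition of the OLS covariate coefficient: with D̂ = (1/n)∑ z_i z_i' − p_A z̄_A z̄_A' − p_B z̄_B z̄_B', N̂ = p_A( (1/n_A)∑_{i∈A} a_i z_i − ā_A z̄_A ) + p_B( (1/n_B)∑_{i∈B} b_i z_i − b̄_B z̄_B ), D = (1/n)∑ z_i z_i', N = p_A (1/n)∑ a_i z_i + p_B (1/n)∑ b_i z_i, Q = D^{-1}N, and centered outcomes a*_i = a_i − ā, b*_i = b_i − b̄, one has the exact identity (assuming D and D̂ invertible, ∑ z_i = 0): D̂^{-1}N̂ = Q + D^{-1}( p_A( (1/n_A)∑_{i∈A} a*_i z_i − (1/n)∑_i a*_i z_i ) + p_B( (1/n_B)∑_{i∈B} b*_i z_i − (1/n)∑_i b*_i z_i ) ) − D^{-1}( p_A ā*_A z̄_A + p_B b̄*_B z̄_B ) + (D̂^{-1} − D^{-1})N̂, where ā*_A = ā_A − ā, b̄*_B = b̄_B − b̄. -/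

import Mathlib

open Finset Matrix

/-- Exact decomposition of the OLS covariate coefficient (Theorem 3.1):
`D̂⁻¹ N̂ = Q + ν₁ + ν₃ + ν₂`. -/
theorem stmt18 (n K : ℕ) (z : Fin n → Fin K → ℝ) (hzsum : ∑ i, z i = 0)
    (a b : Fin n → ℝ)
    (A : Finset (Fin n)) (hA1 : 1 ≤ A.card) (hA2 : A.card < n)
    (nA nB : ℕ) (hnA : nA = A.card) (hnB : nB = n - nA)
    (pA pB : ℝ) (hpA : pA = (nA : ℝ) / (n : ℝ)) (hpB : pB = (nB : ℝ) / (n : ℝ))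
    (abar bbar : ℝ)
    (habar : abar = (n : ℝ)⁻¹ * ∑ i, a i) (hbbar : bbar = (n : ℝ)⁻¹ * ∑ i, b i)
    (zA zB : Fin K → ℝ)
    (hzA : zA = (nA : ℝ)⁻¹ • ∑ i ∈ A, z i)
    (hzB : zB = (nB : ℝ)⁻¹ • ∑ i ∈ Aᶜ, z i)
    (aA bB : ℝ)
    (haA : aA = (nA : ℝ)⁻¹ * ∑ i ∈ A, a i)
    (hbB : bB = (nB : ℝ)⁻¹ * ∑ i ∈ Aᶜ, b i)
    (D Dhat : Matrix (Fin K) (Fin K) ℝ)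
    (hD : D = (n : ℝ)⁻¹ • ∑ i, vecMulVec (z i) (z i))
    (hDhat : Dhat = D - pA • vecMulVec zA zA - pB • vecMulVec zB zB)
    (hDinv : IsUnit D.det) (hDhatinv : IsUnit Dhat.det)
    (N Nhat : Fin K → ℝ)
    (hN : N = pA • ((n : ℝ)⁻¹ • ∑ i, a i • z i) + pB • ((n : ℝ)⁻¹ • ∑ i, b i • z i))
    (hNhat : Nhat = pA • ((nA : ℝ)⁻¹ • ∑ i ∈ A, a i • z i - aA • zA)
                    + pB • ((nB : ℝ)⁻¹ • ∑ i ∈ Aᶜ, b i • z i - bB • zB))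
    (Q : Fin K → ℝ) (hQ : Q = D⁻¹ *ᵥ N) :
    Dhat⁻¹ *ᵥ Nhat
      = Q
        + D⁻¹ *ᵥ (pA • ((nA : ℝ)⁻¹ • ∑ i ∈ A, (a i - abar) • z i
                          - (n : ℝ)⁻¹ • ∑ i, (a i - abar) • z i)
                  + pB • ((nB : ℝ)⁻¹ • ∑ i ∈ Aᶜ, (b i - bbar) • z i
                          - (n : ℝ)⁻¹ • ∑ i, (b i - bbar) • z i))
        - D⁻¹ *ᵥ (pA • ((aA - abar) • zA) + pB • ((bB - bbar) • zB))
        + (Dhat⁻¹ - D⁻¹) *ᵥ Nhat := by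
  have key : (pA • ((nA : ℝ)⁻¹ • ∑ i ∈ A, (a i - abar) • z i
                          - (n : ℝ)⁻¹ • ∑ i, (a i - abar) • z i)
                  + pB • ((nB : ℝ)⁻¹ • ∑ i ∈ Aᶜ, (b i - bbar) • z i
                          - (n : ℝ)⁻¹ • ∑ i, (b i - bbar) • z i))
      = Nhat - N + (pA • ((aA - abar) • zA) + pB • ((bB - bbar) • zB)) := by
    subst hN hNhat hzA hzB haA hbB
    funext k
    have hz : ∑ i, z i k = 0 := by
      have := congrFun hzsum k
      simpa [Finset.sum_apply] using this
    simp only [Pi.add_apply, Pi.sub_apply, Pi.smul_apply, Finset.sum_apply,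
      smul_eq_mul, sub_mul, Finset.sum_sub_distrib, ← Finset.mul_sum]
    rw [hz]
    ring
  rw [hQ, key, sub_mulVec, mulVec_add, mulVec_sub, mulVec_add]
  abel
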